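/- Let U be a nonzero n×n paraunitary matrix of Laurent polynomials over ℂ, and let Δ be a real number with 0 < Δ < 1. Then U[Δ] is invertible, its inverse equals U*[Δ], and ‖U[Δ]⁻¹‖ ≤ Δ^{−deg(U)}, where ‖·‖ is the operator (spectral) norm. -/

import Mathlib

open scoped ComplexConjugate
open LaurentPolynomial Finset

noncomputable section

/-- Evaluation of a Laurent polynomial at a complex number. -/
def Leval (ω : ℂ) (p : LaurentPolynomial ℂ) : ℂ :=
  ∑ k ∈ p.coeff.support, p.coeff k * ω ^ k

/-- Para-conjugate of a Laurent polynomial: conjugate the coefficients and substitute `z⁻¹`. -/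
def paraConj (p : LaurentPolynomial ℂ) : LaurentPolynomial ℂ :=
  AddMonoidAlgebra.ofCoeff
    (Finsupp.equivMapDomain (Equiv.neg ℤ) (Finsupp.mapRange (starRingEnd ℂ) (map_zero _) p.coeff))

/-- `U*`: the transpose of `U` with every entry para-conjugated. -/
def paraConjTranspose {n : ℕ} (U : Matrix (Fin n) (Fin n) (LaurentPolynomial ℂ)) :
    Matrix (Fin n) (Fin n) (LaurentPolynomial ℂ) :=
  U.transpose.map paraConj

/-- A Laurent-polynomial matrix is paraunitary if `U* * U = 1`. -/
def IsParaunitary {n : ℕ} (U : Matrix (Fin n) (Fin n) (LaurentPolynomial ℂ)) : Prop :=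
  paraConjTranspose U * U = 1

/-- Entrywise evaluation of a matrix of Laurent polynomials at a complex number. -/
def MatEval {n : ℕ} (ω : ℂ) (M : Matrix (Fin n) (Fin n) (LaurentPolynomial ℂ)) :
    Matrix (Fin n) (Fin n) ℂ :=
  M.map (Leval ω)

/-- A plane-rotation gate: identity except on the 2×2 principal submatrix in rows/columns
`a ≠ b`, where it is a real orthogonal 2×2 matrix (embedded as constant Laurent polynomials). -/
def IsRotationGate {n : ℕ} (G : Matrix (Fin n) (Fin n) (LaurentPolynomial ℂ)) : Prop :=
  ∃ (a b : Fin n) (R : Matrix (Fin 2) (Fin 2) ℝ), a ≠ b ∧ R.transpose * R = 1 ∧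
    G a a = LaurentPolynomial.C (R 0 0 : ℂ) ∧
    G a b = LaurentPolynomial.C (R 0 1 : ℂ) ∧
    G b a = LaurentPolynomial.C (R 1 0 : ℂ) ∧
    G b b = LaurentPolynomial.C (R 1 1 : ℂ) ∧
    (∀ i : Fin n, i ≠ a → i ≠ b → G i i = 1) ∧
    (∀ i j : Fin n, i ≠ j → ¬(i = a ∧ j = b) → ¬(i = b ∧ j = a) → G i j = 0)

/-- A monomial gate: diagonal, equal to `1` on every diagonal entry except one, which is `z^k`. -/
def IsMonomialGate {n : ℕ} (G : Matrix (Fin n) (Fin n) (LaurentPolynomial ℂ)) : Prop :=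
  ∃ (a : Fin n) (k : ℤ),
    G a a = LaurentPolynomial.T k ∧
    (∀ i : Fin n, i ≠ a → G i i = 1) ∧
    (∀ i j : Fin n, i ≠ j → G i j = 0)

/-- A Laurent lift of length `m`: `M 0 = 1` and each step is left multiplication by a
plane-rotation or monomial gate. -/
def IsLaurentLift {n : ℕ} (m : ℕ) (M : ℕ → Matrix (Fin n) (Fin n) (LaurentPolynomial ℂ)) : Prop :=
  M 0 = 1 ∧ ∀ t < m, ∃ G : Matrix (Fin n) (Fin n) (LaurentPolynomial ℂ),
    (IsRotationGate G ∨ IsMonomialGate G) ∧ M (t + 1) = G * M t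

/-- The union of the supports of all the entries of a Laurent-polynomial matrix. -/
def matSupport {n : ℕ} (M : Matrix (Fin n) (Fin n) (LaurentPolynomial ℂ)) : Finset ℤ :=
  (Finset.univ : Finset (Fin n × Fin n)).biUnion fun ij => (M ij.1 ij.2).coeff.support

/-- `deg(M)`: the maximal exponent with a nonzero coefficient over all nonzero entries
(junk value `0` for the zero matrix). -/
def matDeg {n : ℕ} (M : Matrix (Fin n) (Fin n) (LaurentPolynomial ℂ)) : ℤ :=
  WithBot.unbotD 0 (matSupport M).max

/-- `val(M)`: the minimal exponent with a nonzero coefficient over all nonzero entries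
(junk value `0` for the zero matrix). -/
def matVal {n : ℕ} (M : Matrix (Fin n) (Fin n) (LaurentPolynomial ℂ)) : ℤ :=
  WithTop.untopD 0 (matSupport M).min

/-- A Laurent lift is `Δ`-algebraically `κ`-well conditioned if
`Δ ^ (val(M_t) - deg(M_t)) ≤ κ` for all `t`. -/
def IsAlgWellConditioned {n : ℕ} (m : ℕ) (M : ℕ → Matrix (Fin n) (Fin n) (LaurentPolynomial ℂ))
    (Δ κ : ℝ) : Prop :=
  ∀ t ≤ m, Δ ^ (matVal (M t) - matDeg (M t)) ≤ κ

/-- The L2 operator (spectral) norm of a complex matrix. -/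
def specNorm {n : ℕ} (A : Matrix (Fin n) (Fin n) ℂ) : ℝ :=
  ‖Matrix.toEuclideanCLM (𝕜 := ℂ) A‖

/-- The Walsh–Hadamard matrix of order `n = 2^s`:
`H_n(i,j) = n^{-1/2} · (-1)^{⟨[i],[j]⟩}` with `⟨·,·⟩` the mod-2 inner product of bit vectors. -/
def WalshHadamard (s : ℕ) : Matrix (Fin (2 ^ s)) (Fin (2 ^ s)) ℝ :=
  fun i j => (Real.sqrt (2 ^ s))⁻¹ *
    (-1 : ℝ) ^ (∑ r ∈ Finset.range s, (Nat.testBit i.val r).toNat * (Nat.testBit j.val r).toNat)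

/-- The quasi-entropy kernel `h(u) = -u·log₂|u|` (note `h 0 = 0`, since `Real.logb 2 0 = 0`). -/
def hQE (u : ℂ) : ℂ := -u * (Real.logb 2 ‖u‖ : ℂ)

/-- The preconditioned quasi-entropy
`Φ_{A,B}(M) = Σ_k Σ_{i,j} h(coeff((M·A)_{i,j},k) · conj(coeff((M·B)_{i,j},k)))`.
The sum over `k` is restricted to a finite set supporting all nonzero terms. -/
def Phi {n : ℕ} (A B M : Matrix (Fin n) (Fin n) (LaurentPolynomial ℂ)) : ℂ :=
  ∑ i : Fin n, ∑ j : Fin n,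
    ∑ k ∈ ((M * A) i j).coeff.support ∪ ((M * B) i j).coeff.support,
      hQE (((M * A) i j).coeff k * conj (((M * B) i j).coeff k))

/-- The norm of a Laurent polynomial: `sqrt (Σ_k |coeff(p,k)|²)`. -/
def pnorm (p : LaurentPolynomial ℂ) : ℝ :=
  Real.sqrt (∑ k ∈ p.coeff.support, ‖p.coeff k‖ ^ 2)

/-- The norm of the `i`-th row of a Laurent-polynomial matrix. -/
def rowNorm {n : ℕ} (M : Matrix (Fin n) (Fin n) (LaurentPolynomial ℂ)) (i : Fin n) : ℝ :=
  Real.sqrt (∑ j : Fin n, pnorm (M i j) ^ 2)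

/-- The `(2,∞)` norm of a Laurent-polynomial matrix: the maximum row norm. -/
def norm2inf {n : ℕ} (M : Matrix (Fin n) (Fin n) (LaurentPolynomial ℂ)) : ℝ :=
  ⨆ i : Fin n, rowNorm M i

end

noncomputable section AuxProof
open Matrix

def evalAlgHom (u : ℂˣ) : LaurentPolynomial ℂ →ₐ[ℂ] ℂ :=
  AddMonoidAlgebra.lift ℂ ℂ ℤ ((Units.coeHom ℂ).comp (zpowersHom ℂˣ u))

lemma Leval_eq (u : ℂˣ) (p : LaurentPolynomial ℂ) : Leval (u : ℂ) p = evalAlgHom u p := by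
  rw [evalAlgHom, AddMonoidAlgebra.lift_apply, Finsupp.sum]
  refine Finset.sum_congr rfl fun k hk => ?_
  simp [smul_eq_mul, zpowersHom_apply, Units.val_zpow_eq_zpow_val]

lemma paraConj_apply (p : LaurentPolynomial ℂ) (k : ℤ) : (paraConj p).coeff k = conj (p.coeff (-k)) := by
  simp [paraConj]

lemma Leval_paraConj (z : ℂ) (p : LaurentPolynomial ℂ) :
    Leval z (paraConj p) = ∑ m ∈ p.coeff.support, conj (p.coeff m) * z ^ (-m) := by
  show (Finsupp.sum (paraConj p).coeff fun k c => c * z ^ k) = _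
  rw [paraConj, AddMonoidAlgebra.coeff_ofCoeff, Finsupp.sum_equivMapDomain, Finsupp.sum_mapRange_index (by simp)]
  rfl

lemma Leval_paraConj_circle (z : ℂ) (hz : ‖z‖ = 1) (p : LaurentPolynomial ℂ) :
    Leval z (paraConj p) = conj (Leval z p) := by
  have hz0 : z ≠ 0 := by
    intro h; rw [h, norm_zero] at hz; norm_num at hz
  have hcz : conj z = z⁻¹ := by
    have h1 : z * conj z = 1 := by
      rw [Complex.mul_conj]
      have : ‖z‖ = 1 := hz
      rw [Complex.normSq_eq_norm_sq, this]; norm_num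
    exact (inv_eq_of_mul_eq_one_right h1).symm
  rw [Leval_paraConj, Leval, map_sum]
  refine Finset.sum_congr rfl fun m hm => ?_
  rw [_root_.map_mul, map_zpow₀, hcz, _root_.inv_zpow, ← _root_.zpow_neg]

lemma MatEval_eq {n : ℕ} (u : ℂˣ) (M : Matrix (Fin n) (Fin n) (LaurentPolynomial ℂ)) :
    MatEval (u : ℂ) M = M.map (evalAlgHom u).toRingHom := by
  funext i j
  exact Leval_eq u (M i j)

lemma MatEval_mul {n : ℕ} (u : ℂˣ) (A B : Matrix (Fin n) (Fin n) (LaurentPolynomial ℂ)) :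
    MatEval (u : ℂ) (A * B) = MatEval (u : ℂ) A * MatEval (u : ℂ) B := by
  simp only [MatEval_eq]
  exact Matrix.map_mul

lemma MatEval_one {n : ℕ} (u : ℂˣ) :
    MatEval (n := n) (u : ℂ) 1 = 1 := by
  rw [MatEval_eq]
  exact Matrix.map_one _ (map_zero _) (map_one _)

lemma MatEval_paraConjTranspose_circle {n : ℕ} (z : ℂ) (hz : ‖z‖ = 1)
    (U : Matrix (Fin n) (Fin n) (LaurentPolynomial ℂ)) :
    MatEval z (paraConjTranspose U) = (MatEval z U)ᴴ := by
  funext i j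
  simp only [MatEval, paraConjTranspose, Matrix.map_apply, Matrix.transpose_apply,
    Matrix.conjTranspose_apply]
  exact Leval_paraConj_circle z hz (U j i)

lemma specNorm_le_one {n : ℕ} {A : Matrix (Fin n) (Fin n) ℂ} (h : Aᴴ * A = 1) :
    specNorm A ≤ 1 := by
  set T := Matrix.toEuclideanCLM (𝕜 := ℂ) A with hT
  have hs : star T * T = 1 := by
    rw [← map_star, ← _root_.map_mul]
    have : star A = Aᴴ := rfl
    rw [this, h, _root_.map_one]
  have h2 : ‖T‖ * ‖T‖ = ‖star T * T‖ := (CStarRing.norm_star_mul_self).symm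
  rw [hs] at h2
  have h3 : ‖(1 : EuclideanSpace ℂ (Fin n) →L[ℂ] EuclideanSpace ℂ (Fin n))‖ ≤ 1 :=
    ContinuousLinearMap.norm_id_le
  have := norm_nonneg T
  show ‖T‖ ≤ 1
  nlinarith

lemma le_matDeg {n : ℕ} {U : Matrix (Fin n) (Fin n) (LaurentPolynomial ℂ)} {i j : Fin n} {k : ℤ}
    (hk : k ∈ (U i j).coeff.support) : k ≤ matDeg U := by
  have hmem : k ∈ matSupport U := Finset.mem_biUnion.mpr ⟨(i, j), Finset.mem_univ _, hk⟩
  obtain ⟨b, hb⟩ := Finset.max_of_mem hmem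
  have := Finset.le_max hmem
  rw [hb] at this
  rw [matDeg, hb]
  exact_mod_cast this


end AuxProof

/-- inverse of an evaluated paraunitary matrix and its norm bound. -/
theorem paraunitary_eval_inv_norm_bound {n : ℕ}
    (U : Matrix (Fin n) (Fin n) (LaurentPolynomial ℂ)) (hU : IsParaunitary U) (hU0 : U ≠ 0)
    (Δ : ℝ) (h0 : 0 < Δ) (h1 : Δ < 1) :
    IsUnit (MatEval (Δ : ℂ) U) ∧
      (MatEval (Δ : ℂ) U)⁻¹ = MatEval (Δ : ℂ) (paraConjTranspose U) ∧
      specNorm (MatEval (Δ : ℂ) U)⁻¹ ≤ Δ ^ (-(matDeg U)) := by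
  have hU' : paraConjTranspose U * U = 1 := hU
  have hΔ0 : (Δ : ℂ) ≠ 0 := by exact_mod_cast h0.ne'
  have hBA : MatEval (Δ:ℂ) (paraConjTranspose U) * MatEval (Δ:ℂ) U = 1 := by
    have := MatEval_mul (Units.mk0 (Δ:ℂ) hΔ0) (paraConjTranspose U) U
    simp only [Units.val_mk0] at this
    rw [← this, hU']
    exact MatEval_one (Units.mk0 (Δ:ℂ) hΔ0)
  have hAB : MatEval (Δ:ℂ) U * MatEval (Δ:ℂ) (paraConjTranspose U) = 1 :=
    mul_eq_one_comm.mpr hBA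
  have hunit : IsUnit (MatEval (Δ:ℂ) U) :=
    isUnit_iff_exists.mpr ⟨_, hAB, hBA⟩
  have hinv : (MatEval (Δ:ℂ) U)⁻¹ = MatEval (Δ:ℂ) (paraConjTranspose U) :=
    Matrix.inv_eq_left_inv hBA
  refine ⟨hunit, hinv, ?_⟩
  rw [hinv]
  set d : ℤ := matDeg U with hd
  have hsupp : ∀ i j : Fin n, ∀ k ∈ (paraConjTranspose U i j).coeff.support, 0 ≤ k + d := by
    intro i j k hk
    have hk' : (paraConjTranspose U i j).coeff k ≠ 0 := Finsupp.mem_support_iff.mp hk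
    have : paraConjTranspose U i j = paraConj (U j i) := rfl
    rw [this, paraConj_apply] at hk'
    have h2 : (U j i).coeff (-k) ≠ 0 := fun h => hk' (by rw [h, map_zero])
    have h3 : -k ≤ d := le_matDeg (Finsupp.mem_support_iff.mpr h2)
    linarith
  set E : Fin n → Fin n → (EuclideanSpace ℂ (Fin n) →L[ℂ] EuclideanSpace ℂ (Fin n)) :=
    fun i j => Matrix.toEuclideanCLM (𝕜 := ℂ) (Matrix.single i j 1) with hE
  set F : ℂ → (EuclideanSpace ℂ (Fin n) →L[ℂ] EuclideanSpace ℂ (Fin n)) :=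
    fun z => ∑ i : Fin n, ∑ j : Fin n,
      (∑ k ∈ (paraConjTranspose U i j).coeff.support,
        (paraConjTranspose U i j).coeff k * z ^ (k + d).toNat) • E i j with hF
  have hdiff : Differentiable ℂ F := by
    apply Differentiable.fun_sum
    intro i _
    apply Differentiable.fun_sum
    intro j _
    apply Differentiable.smul_const
    apply Differentiable.fun_sum
    intro k _
    exact (differentiable_const _).mul (differentiable_pow _)
  have hFval : ∀ z : ℂ, z ≠ 0 →
      F z = z ^ d • Matrix.toEuclideanCLM (𝕜 := ℂ) (MatEval z (paraConjTranspose U)) := by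
    intro z hz
    have hmat : MatEval z (paraConjTranspose U) = ∑ i : Fin n, ∑ j : Fin n,
        (Leval z (paraConjTranspose U i j)) • Matrix.single i j (1 : ℂ) := by
      conv_lhs => rw [Matrix.matrix_eq_sum_single (MatEval z (paraConjTranspose U))]
      refine Finset.sum_congr rfl fun i _ => Finset.sum_congr rfl fun j _ => ?_
      rw [Matrix.smul_single, smul_eq_mul, mul_one]
      rfl
    rw [hmat, map_sum, Finset.smul_sum]
    refine Finset.sum_congr rfl fun i _ => ?_
    rw [map_sum, Finset.smul_sum]
    refine Finset.sum_congr rfl fun j _ => ?_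
    rw [_root_.map_smul, smul_smul, hE]
    congr 1
    rw [Leval, Finset.mul_sum]
    refine Finset.sum_congr rfl fun k hk => ?_
    have h0k : 0 ≤ k + d := hsupp i j k hk
    have : z ^ (k + d).toNat = z ^ (k + d) := by
      rw [← zpow_natCast, Int.toNat_of_nonneg h0k]
    rw [this, zpow_add₀ hz]
    ring
  have hsphere : ∀ z ∈ frontier (Metric.ball (0:ℂ) 1), ‖F z‖ ≤ 1 := by
    intro z hzf
    rw [frontier_ball (0:ℂ) one_ne_zero] at hzf
    have hz1 : ‖z‖ = 1 := by simpa using hzf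
    have hz0 : z ≠ 0 := by intro h; rw [h, norm_zero] at hz1; norm_num at hz1
    rw [hFval z hz0, norm_smul (z ^ d) (Matrix.toEuclideanCLM (𝕜 := ℂ) (MatEval z (paraConjTranspose U))), norm_zpow, hz1, _root_.one_zpow, one_mul,
      MatEval_paraConjTranspose_circle z hz1]
    refine specNorm_le_one ?_
    rw [Matrix.conjTranspose_conjTranspose, mul_eq_one_comm,
      ← MatEval_paraConjTranspose_circle z hz1]
    have := MatEval_mul (Units.mk0 z hz0) (paraConjTranspose U) U
    simp only [Units.val_mk0] at this
    rw [← this, hU']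
    exact MatEval_one (Units.mk0 z hz0)
  have hmem : (Δ : ℂ) ∈ closure (Metric.ball (0:ℂ) 1) := by
    rw [closure_ball (0:ℂ) one_ne_zero]
    simp only [Metric.mem_closedBall, dist_zero_right, Complex.norm_real,
      Real.norm_eq_abs, abs_of_pos h0]
    exact h1.le
  have hbound : ‖F (Δ:ℂ)‖ ≤ 1 :=
    Complex.norm_le_of_forall_mem_frontier_norm_le Metric.isBounded_ball
      hdiff.diffContOnCl hsphere hmem
  rw [hFval (Δ:ℂ) hΔ0, norm_smul ((Δ:ℂ) ^ d) (Matrix.toEuclideanCLM (𝕜 := ℂ) (MatEval (Δ:ℂ) (paraConjTranspose U))), norm_zpow, Complex.norm_real, Real.norm_eq_abs,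
    abs_of_pos h0] at hbound
  show ‖Matrix.toEuclideanCLM (𝕜 := ℂ) (MatEval (Δ:ℂ) (paraConjTranspose U))‖ ≤ Δ ^ (-d)
  have hp : (0:ℝ) < Δ ^ d := zpow_pos h0 d
  rw [_root_.zpow_neg, ← one_div, le_div_iff₀ hp, mul_comm]
  exact hbound
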